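/- Fix a finite set X and a collection of menus Σ ⊆ 2^X∖{∅}. Two distributions μ, μ' ∈ Δ(C_Σ) over choice functions generate identical choice probabilities on every menu in Σ if and only if μ − μ' lies in the Ryser subspace ℛ^{rc}. In particular, for any M ⊆ Δ(C_Σ) and μ ∈ M, the set of distributions in M generating the same choice probabilities as μ on every menu in Σ is exactly (μ + ℛ^{rc}) ∩ M. -/

import Mathlib

open scoped Classical

namespace Stmt7

variable {X : Type*} [Fintype X] [DecidableEq X]

/-- A choice function on the collection of menus `Men`: for each menu `A ∈ Men` it
selects an element of `A`. -/
abbrev ChoiceFun (Men : Finset (Finset X)) :=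
  {c : Men → X // ∀ A : Men, c A ∈ (A : Finset X)}

variable (Men : Finset (Finset X))

/-- `μ` is a probability distribution over choice functions. -/
def IsDist (μ : ChoiceFun Men → ℝ) : Prop :=
  (∀ c, 0 ≤ μ c) ∧ ∑ c : ChoiceFun Men, μ c = 1

/-- The probability that `a` is chosen from the menu `A ∈ Men` under `μ`. -/
noncomputable def choiceProb (μ : ChoiceFun Men → ℝ) (A : Men) (a : X) : ℝ :=
  ∑ c : ChoiceFun Men, if c.1 A = a then μ c else 0

/-- Two measures over choice functions generate identical choice probabilities on every
menu in `Men`. -/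
def SameRC (μ ν : ChoiceFun Men → ℝ) : Prop :=
  ∀ (A : Men) (a : X), choiceProb Men μ A a = choiceProb Men ν A a

/-- The indicator (point mass) vector of a choice function. -/
noncomputable def ind (c₀ : ChoiceFun Men) : ChoiceFun Men → ℝ :=
  fun c => if c = c₀ then 1 else 0

/-- A Ryser swap for the random choice model: `c₁', c₂'` are obtained from `c₁, c₂` by
exchanging their choices on a single menu `A₀ ∈ Men`. -/
def IsRyserSwapRC (R : ChoiceFun Men → ℝ) : Prop :=
  ∃ (c₁ c₂ c₁' c₂' : ChoiceFun Men) (A₀ : Men),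
    c₁'.1 A₀ = c₂.1 A₀ ∧ c₂'.1 A₀ = c₁.1 A₀ ∧
    (∀ B : Men, B ≠ A₀ → c₁'.1 B = c₁.1 B ∧ c₂'.1 B = c₂.1 B) ∧
    R = ind Men c₁' + ind Men c₂' - ind Men c₁ - ind Men c₂

/-- The Ryser subspace for the random choice model. -/
noncomputable def RyserSpaceRC : Submodule ℝ (ChoiceFun Men → ℝ) :=
  Submodule.span ℝ {R | IsRyserSwapRC Men R}

noncomputable def upd (c : ChoiceFun Men) (A : Men) (a : X) (ha : a ∈ (A : Finset X)) :
    ChoiceFun Men :=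
  ⟨Function.update c.1 A a, by
    intro B
    by_cases h : B = A
    · subst h; simpa using ha
    · rw [Function.update_of_ne h]; exact c.2 B⟩

lemma upd_same (c : ChoiceFun Men) (A : Men) (a : X) (ha : a ∈ (A : Finset X)) :
    (upd Men c A a ha).1 A = a := Function.update_self _ _ _

lemma upd_ne (c : ChoiceFun Men) (A : Men) (a : X) (ha : a ∈ (A : Finset X))
    {B : Men} (hB : B ≠ A) : (upd Men c A a ha).1 B = c.1 B :=
  Function.update_of_ne hB _ _

lemma choiceProb_sub (μ ν : ChoiceFun Men → ℝ) (A : Men) (a : X) :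
    choiceProb Men (μ - ν) A a = choiceProb Men μ A a - choiceProb Men ν A a := by
  simp only [choiceProb, Pi.sub_apply, ← Finset.sum_sub_distrib]
  exact Finset.sum_congr rfl fun c _ => by split <;> simp

lemma choiceProb_add (μ ν : ChoiceFun Men → ℝ) (A : Men) (a : X) :
    choiceProb Men (μ + ν) A a = choiceProb Men μ A a + choiceProb Men ν A a := by
  simp only [choiceProb, Pi.add_apply, ← Finset.sum_add_distrib]
  exact Finset.sum_congr rfl fun c _ => by split <;> simp

lemma choiceProb_smul (r : ℝ) (μ : ChoiceFun Men → ℝ) (A : Men) (a : X) :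
    choiceProb Men (r • μ) A a = r * choiceProb Men μ A a := by
  simp only [choiceProb, Pi.smul_apply, smul_eq_mul, Finset.mul_sum]
  exact Finset.sum_congr rfl fun c _ => by split <;> simp

lemma choiceProb_ind (c₀ : ChoiceFun Men) (A : Men) (a : X) :
    choiceProb Men (ind Men c₀) A a = if c₀.1 A = a then 1 else 0 := by
  unfold choiceProb ind
  have h : ∀ c : ChoiceFun Men,
      (if c.1 A = a then (if c = c₀ then (1:ℝ) else 0) else 0)
        = if c = c₀ then (if c₀.1 A = a then (1:ℝ) else 0) else 0 := by
    intro c; by_cases h : c = c₀ <;> simp [h]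
  rw [Finset.sum_congr rfl fun c _ => h c, Finset.sum_ite_eq' Finset.univ c₀]
  simp

/-- Submodule of vectors with zero marginals. -/
noncomputable def KerRC : Submodule ℝ (ChoiceFun Men → ℝ) where
  carrier := {f | ∀ (A : Men) (a : X), choiceProb Men f A a = 0}
  add_mem' := by
    intro f g hf hg A a
    rw [choiceProb_add, hf A a, hg A a, add_zero]
  zero_mem' := by
    intro A a; simp [choiceProb]
  smul_mem' := by
    intro r f hf A a
    rw [choiceProb_smul, hf A a, mul_zero]

lemma ryser_le_ker : RyserSpaceRC Men ≤ KerRC Men := by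
  rw [RyserSpaceRC, Submodule.span_le]
  rintro R ⟨c₁, c₂, c₁', c₂', A₀, h1, h2, h3, rfl⟩
  intro A a
  have e : ind Men c₁' + ind Men c₂' - ind Men c₁ - ind Men c₂
      = (ind Men c₁' + ind Men c₂') - (ind Men c₁ + ind Men c₂) := by abel
  rw [e, choiceProb_sub, choiceProb_add, choiceProb_add,
    choiceProb_ind, choiceProb_ind, choiceProb_ind, choiceProb_ind]
  by_cases hA : A = A₀
  · subst hA; rw [h1, h2]; ring
  · rw [(h3 A hA).1, (h3 A hA).2]; ring

lemma sum_eq_fiber_sum (f : ChoiceFun Men → ℝ) {Q : Type*} [AddCommGroup Q] [Module ℝ Q]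
    (A : Men) (g : X → Q) :
    ∑ c : ChoiceFun Men, f c • g (c.1 A)
      = ∑ a ∈ (A : Finset X), choiceProb Men f A a • g a := by
  have step1 : ∀ c : ChoiceFun Men,
      f c • g (c.1 A) = ∑ a ∈ (A : Finset X), if c.1 A = a then f c • g a else 0 := by
    intro c
    rw [Finset.sum_ite_eq (A : Finset X) (c.1 A) (fun a => f c • g a), if_pos (c.2 A)]
  rw [Finset.sum_congr rfl fun c _ => step1 c, Finset.sum_comm]
  refine Finset.sum_congr rfl fun a _ => ?_
  rw [choiceProb, Finset.sum_smul]
  refine Finset.sum_congr rfl fun c _ => ?_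
  split <;> simp



lemma key_lemma (c₀ : ChoiceFun Men) (S : Finset {A // A ∈ Men}) :
    ∀ c : ChoiceFun Men, (∀ A ∉ S, c.1 A = c₀.1 A) →
      (RyserSpaceRC Men).mkQ (ind Men c) + S.card • (RyserSpaceRC Men).mkQ (ind Men c₀)
        = (∑ A ∈ S, (RyserSpaceRC Men).mkQ (ind Men (upd Men c₀ A (c.1 A) (c.2 A))))
            + (RyserSpaceRC Men).mkQ (ind Men c₀) := by
  classical
  set V := RyserSpaceRC Men
  set π := V.mkQ
  have hswap : ∀ (c d : ChoiceFun Men) (A : Men),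
      π (ind Men (upd Men c A (d.1 A) (d.2 A))) + π (ind Men (upd Men d A (c.1 A) (c.2 A)))
        = π (ind Men c) + π (ind Men d) := by
    intro c d A
    have hmem : (ind Men (upd Men c A (d.1 A) (d.2 A)) + ind Men (upd Men d A (c.1 A) (c.2 A))
        - ind Men c - ind Men d) ∈ V := by
      apply Submodule.subset_span
      exact ⟨c, d, _, _, A, upd_same Men c A _ _, upd_same Men d A _ _,
        fun B hB => ⟨upd_ne Men c A _ _ hB, upd_ne Men d A _ _ hB⟩, rfl⟩
    have h0 : π (ind Men (upd Men c A (d.1 A) (d.2 A)) + ind Men (upd Men d A (c.1 A) (c.2 A))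
        - ind Men c - ind Men d) = 0 := (Submodule.Quotient.mk_eq_zero V).mpr hmem
    rw [map_sub, map_sub, map_add, sub_sub, sub_eq_zero] at h0
    exact h0
  induction S using Finset.induction with
  | empty =>
    intro c hc
    have : c = c₀ := Subtype.ext (funext fun A => hc A (Finset.notMem_empty A))
    subst this
    simp
  | insert _ _ hA ih =>
    rename_i A S'
    intro c hc
    set cA := upd Men c A (c₀.1 A) (c₀.2 A) with hcA
    have hcA_out : ∀ B ∉ S', cA.1 B = c₀.1 B := by
      intro B hB
      by_cases hBA : B = A
      · subst hBA; exact upd_same Men c B _ _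
      · rw [upd_ne Men c A _ _ hBA]
        exact hc B (by simp [hBA, hB])
    have IH := ih cA hcA_out
    have hsum_eq : (∑ B ∈ S', π (ind Men (upd Men c₀ B (cA.1 B) (cA.2 B))))
        = ∑ B ∈ S', π (ind Men (upd Men c₀ B (c.1 B) (c.2 B))) := by
      refine Finset.sum_congr rfl fun B hB => ?_
      have hBA : B ≠ A := fun h => hA (h ▸ hB)
      have : cA.1 B = c.1 B := upd_ne Men c A _ _ hBA
      congr 1
      exact congrArg (ind Men) (Subtype.ext (by rw [upd, upd]; simp only; rw [this]))
    rw [hsum_eq] at IH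
    have e1 : π (ind Men c)
        = π (ind Men cA) + π (ind Men (upd Men c₀ A (c.1 A) (c.2 A))) - π (ind Men c₀) := by
      exact eq_sub_iff_add_eq.mpr (hswap c c₀ A).symm
    rw [Finset.card_insert_of_notMem hA, Finset.sum_insert hA, e1, succ_nsmul]
    have e2 : (∑ B ∈ S', π (ind Men (upd Men c₀ B (c.1 B) (c.2 B))))
        = π (ind Men cA) + S'.card • π (ind Men c₀) - π (ind Men c₀) := by
      exact eq_sub_iff_add_eq.mpr IH.symm
    rw [e2]; abel

theorem statement7 :
    (∀ μ μ' : ChoiceFun Men → ℝ, IsDist Men μ → IsDist Men μ' →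
      (SameRC Men μ μ' ↔ μ - μ' ∈ RyserSpaceRC Men)) ∧
    (∀ M : Set (ChoiceFun Men → ℝ), (∀ μ ∈ M, IsDist Men μ) → ∀ μ ∈ M,
      {ν | ν ∈ M ∧ SameRC Men μ ν} =
        {ν | (∃ r ∈ RyserSpaceRC Men, ν = μ + r) ∧ ν ∈ M}) := by
  classical
  have part1 : ∀ μ μ' : ChoiceFun Men → ℝ, IsDist Men μ → IsDist Men μ' →
      (SameRC Men μ μ' ↔ μ - μ' ∈ RyserSpaceRC Men) := by
    intro μ μ' hμ hμ'
    constructor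
    · intro h
      set V := RyserSpaceRC Men
      set π := V.mkQ with hπ
      set f := μ - μ' with hf
      have hC : Nonempty (ChoiceFun Men) := by
        by_contra hne
        haveI : IsEmpty (ChoiceFun Men) := not_nonempty_iff.mp hne
        have := hμ.2
        simp at this
      obtain ⟨c₀⟩ := hC
      have hcp : ∀ (A : Men) (a : X), choiceProb Men f A a = 0 := by
        intro A a
        rw [hf, choiceProb_sub, h A a, sub_self]
      have hsumf : ∑ c : ChoiceFun Men, f c = 0 := by
        simp only [hf, Pi.sub_apply, Finset.sum_sub_distrib, hμ.2, hμ'.2, sub_self]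
      rw [← Submodule.Quotient.mk_eq_zero V]
      have hdecomp : f = ∑ c : ChoiceFun Men, f c • ind Men c := by
        funext c
        simp only [Finset.sum_apply, Pi.smul_apply, ind, smul_eq_mul]
        rw [Finset.sum_congr rfl (fun c' _ => by rw [mul_ite, mul_one, mul_zero]),
          Finset.sum_ite_eq Finset.univ c]
        simp
      have : π f = ∑ c : ChoiceFun Men, f c • π (ind Men c) := by
        conv_lhs => rw [hdecomp]
        rw [map_sum]
        exact Finset.sum_congr rfl fun c _ => map_smul π _ _
      rw [show (Submodule.Quotient.mk f : _ ⧸ V) = π f from rfl, this]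
      set n := (Finset.univ : Finset {A // A ∈ Men}).card
      have hkey : ∀ c : ChoiceFun Men,
          π (ind Men c) = (∑ A : Men, π (ind Men (upd Men c₀ A (c.1 A) (c.2 A))))
            + π (ind Men c₀) - n • π (ind Men c₀) := by
        intro c
        have := key_lemma Men c₀ Finset.univ c (fun A hA => absurd (Finset.mem_univ A) hA)
        rw [← this]; abel
      set g : Men → X → ((ChoiceFun Men → ℝ) ⧸ V) := fun A a =>
        if ha : a ∈ (A : Finset X) then π (ind Men (upd Men c₀ A a ha)) else 0 with hg
      have hgc : ∀ (c : ChoiceFun Men) (A : Men),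
          π (ind Men (upd Men c₀ A (c.1 A) (c.2 A))) = g A (c.1 A) := by
        intro c A
        rw [hg]; simp only
        rw [dif_pos (c.2 A)]
      calc ∑ c : ChoiceFun Men, f c • π (ind Men c)
          = ∑ c : ChoiceFun Men, f c • ((∑ A : Men, g A (c.1 A))
              + π (ind Men c₀) - n • π (ind Men c₀)) := by
            refine Finset.sum_congr rfl fun c _ => ?_
            rw [hkey c, Finset.sum_congr rfl fun A _ => hgc c A]
        _ = (∑ A : Men, ∑ c : ChoiceFun Men, f c • g A (c.1 A))
              + (∑ c : ChoiceFun Men, f c) • (π (ind Men c₀) - n • π (ind Men c₀)) := by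
            rw [Finset.sum_smul, Finset.sum_comm, ← Finset.sum_add_distrib]
            refine Finset.sum_congr rfl fun c _ => ?_
            rw [add_sub_assoc, smul_add, Finset.smul_sum]
        _ = 0 := by
            rw [hsumf, zero_smul, add_zero]
            refine Finset.sum_eq_zero fun A _ => ?_
            rw [sum_eq_fiber_sum]
            exact Finset.sum_eq_zero fun a _ => by rw [hcp A a, zero_smul]
    · intro hmem A a
      have h0 := ryser_le_ker Men hmem A a
      rw [choiceProb_sub] at h0
      linarith
  refine ⟨part1, ?_⟩
  intro M hM μ hμ
  ext ν
  simp only [Set.mem_setOf_eq]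
  constructor
  · rintro ⟨hν, hs⟩
    refine ⟨⟨ν - μ, ?_, by ring⟩, hν⟩
    have := (part1 μ ν (hM μ hμ) (hM ν hν)).mp hs
    simpa [neg_sub] using (RyserSpaceRC Men).neg_mem this
  · rintro ⟨⟨r, hr, rfl⟩, hν⟩
    refine ⟨hν, (part1 μ (μ + r) (hM μ hμ) (hM _ hν)).mpr ?_⟩
    have : μ - (μ + r) = -r := by ring
    rw [this]
    exact (RyserSpaceRC Men).neg_mem hr

end Stmt7
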